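/- Let d_min, R_o, r_d ≥ 0 and set r_safe = d_min + R_o + r_d; for x, o ∈ EuclideanSpace ℝ (Fin 3) define H(x, o) = ‖x − o‖ − r_safe. Let x_k, x_{k+1}, o_k, o_{k+1}, ô_{k+1} ∈ EuclideanSpace ℝ (Fin 3) and γ ∈ ℝ with 0 < γ ≤ 1. If ‖o_{k+1} − ô_{k+1}‖ ≤ r_d, H(x_k, o_k) ≥ 0, and the CBF-guided safety criterion H(x_{k+1}, ô_{k+1}) − H(x_k, o_k) + γ·H(x_k, o_k) ≥ 0 holds, then ‖x_{k+1} − o_{k+1}‖ − d_min − R_o ≥ 0, i.e. x_{k+1} lies in the safe set. -/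
import Mathlib

/-- Single-step content of Theorem 1: with `r_safe = d_min + R_o + r_d` and
`H x o = ‖x - o‖ - r_safe`, if the observer error satisfies
`‖o_{k+1} - ohat_{k+1}‖ ≤ r_d`, `H x_k o_k ≥ 0` and the CBF-guided safety
criterion `H x_{k+1} ohat_{k+1} - H x_k o_k + γ H x_k o_k ≥ 0` holds with
`0 < γ ≤ 1`, then `‖x_{k+1} - o_{k+1}‖ - d_min - R_o ≥ 0`. -/
theorem cbfsc_single_step_safety
    (dmin Ro rd : ℝ) (hdmin : 0 ≤ dmin) (hRo : 0 ≤ Ro) (hrd : 0 ≤ rd)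
    (rsafe : ℝ) (hrsafe : rsafe = dmin + Ro + rd)
    (H : EuclideanSpace ℝ (Fin 3) → EuclideanSpace ℝ (Fin 3) → ℝ)
    (hH : ∀ x o : EuclideanSpace ℝ (Fin 3), H x o = ‖x - o‖ - rsafe)
    (xk xk1 ok ok1 ohatk1 : EuclideanSpace ℝ (Fin 3))
    (γ : ℝ) (hγ0 : 0 < γ) (hγ1 : γ ≤ 1)
    (herr : ‖ok1 - ohatk1‖ ≤ rd)
    (hsafe : H xk ok ≥ 0)
    (hcbf : H xk1 ohatk1 - H xk ok + γ * H xk ok ≥ 0) :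
    ‖xk1 - ok1‖ - dmin - Ro ≥ 0 := by
  have h1 : H xk1 ohatk1 ≥ 0 := by nlinarith
  have h2 : ‖xk1 - ohatk1‖ ≥ rsafe := by rw [hH] at h1; linarith
  have htri : ‖xk1 - ohatk1‖ ≤ ‖xk1 - ok1‖ + ‖ok1 - ohatk1‖ :=
    norm_sub_le_norm_sub_add_norm_sub _ _ _
  linarith [hrsafe ▸ h2]
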